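/- For every b ∈ ℂ and every d ∈ C: au₊(b,d) ⊒ au(b,d); that is, the antagonistic colour-witness update is at least as good as the antagonistic concise classic update with respect to the order ⊒. -/

import Mathlib

open scoped Classical

/-- Membership in `C⁻`, where `C = {lo,…,hi}`: everything of `C` except `hi` when `hi` is odd. -/
def CminusMem (lo hi c : ℕ) : Prop := lo ≤ c ∧ c ≤ hi ∧ (Even hi ∨ c ≠ hi)

/-- A potential witness: a sequence `b = b_k,…,b_0` over `C_⊥ = C⁻ ∪ {⊥}`, with `⊥ = none`. -/
abbrev Wit : Type := ℕ → Option ℕ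

/-- The statespace of the update games: witnesses together with the top element `WON`,
which is represented by `none`. -/
abbrev St : Type := Option Wit

/-- Indices `≤ k` of entries of the witness carrying an even colour. -/
noncomputable def evenIdx (k : ℕ) (b : Wit) : Finset ℕ :=
  (Finset.range (k + 1)).filter fun i => ∃ c, b i = some c ∧ Even c

/-- Indices `≤ k` of entries of the witness carrying an odd colour. -/
noncomputable def oddIdx (k : ℕ) (b : Wit) : Finset ℕ :=
  (Finset.range (k + 1)).filter fun i => ∃ c, b i = some c ∧ Odd c

/-- `evenodd(b)`: the even indices if no entry is odd; otherwise the even indices above the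
largest odd index `o`, together with `o`. -/
noncomputable def evenodd (k : ℕ) (b : Wit) : Finset ℕ :=
  if h : (oddIdx k b).Nonempty then
    ((evenIdx k b).filter fun i => (oddIdx k b).max' h < i) ∪ {(oddIdx k b).max' h}
  else evenIdx k b

/-- The value of a witness: `val(b) = Σ_{i ∈ evenodd(b)} 2^i`. -/
noncomputable def valw (k : ℕ) (b : Wit) : ℕ := ∑ i ∈ evenodd k b, 2 ^ i

/-- The order `⪰` on `C_⊥`: every colour is better than `⊥`, even colours are better than odd
ones, higher even colours are better than lower even ones, and lower odd colours are better
than higher odd ones. -/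
def colGe : Option ℕ → Option ℕ → Prop
  | _, none => True
  | none, some _ => False
  | some a, some b => (Even a ∧ (Odd b ∨ b ≤ a)) ∨ (Odd a ∧ Odd b ∧ a ≤ b)

/-- The lexicographic order `⊒` on sequences of length `k+1`, with the entry of index `k`
most significant, comparing entries by `⪰`. -/
def seqGe (k : ℕ) (a b : Wit) : Prop :=
  (∀ i ≤ k, a i = b i) ∨
  ∃ i ≤ k, (∀ i', i < i' → i' ≤ k → a i' = b i') ∧ colGe (a i) (b i) ∧ a i ≠ b i

/-- The order `⊒` on the statespace, with top element `WON = none`. -/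
def stGe (k : ℕ) : St → St → Prop
  | none, _ => True
  | some _, none => False
  | some a, some b => seqGe k a b

/-- The truncation `↓₁b`: for each odd colour, all occurrences other than the leftmost
(highest-index, among indices `≤ k`) one are replaced by `⊥`. -/
noncomputable def trunc (k : ℕ) (b : Wit) : Wit := fun i =>
  match b i with
  | none => none
  | some o => if Odd o ∧ ∃ i', i < i' ∧ i' ≤ k ∧ b i' = some o then none else some o

/-- The classic raw update `ru'(b,d)` of a witness `b = b_k,…,b_0` over `C_⊥` (with
`C = {lo,…,hi}`) upon reading a vertex of colour `d`. -/
noncomputable def ruC (k hi : ℕ) (b : Wit) (d : ℕ) : Wit :=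
  if Odd d ∧ d = hi then fun _ => none
  else if (Odd d ∧ ∀ i ≤ k, b i = none ∨ ∃ c, b i = some c ∧ d ≤ c)
       ∨ (Even d ∧ ∀ i ≤ k, ∃ c, b i = some c ∧ Even c ∧ d ≤ c) then b
  else if Odd d then
    let j := Nat.findGreatest (fun j' => ∃ c, b j' = some c ∧ c < d) k
    fun i => if j < i then b i else if i = j ∧ j ≠ 0 then some d else none
  else
    let j0 := Nat.findGreatest (fun j' => ∃ c, b j' = some c ∧ c < d) k
    let j1 := if h : ∃ j', j' ≤ k ∧ ¬ ∃ c, b j' = some c ∧ Even c then Nat.find h else 0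
    let j := max j0 j1
    fun i => if j < i then b i else if i = j then some d else none

/-- The update `up(b,d)`: `↓₁ru'(b,d)` if `val(ru'(b,d)) ≤ e`, and `WON` otherwise;
moreover `up(WON,d) = WON`. -/
noncomputable def upC (k hi e : ℕ) : St → ℕ → St
  | none, _ => none
  | some b, d => if valw k (ruC k hi b d) ≤ e then some (trunc k (ruC k hi b d)) else none

/-- The colour-witness raw update `ru₊(b,d)` of a concise witness `b = b_k,…,b_0` over `C_⊥`
(with `C = {lo,…,hi}`) upon reading a vertex of colour `d`. -/
noncomputable def ruP (k hi : ℕ) (b : Wit) (d : ℕ) : Wit :=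
  if Odd d ∧ d = hi then fun _ => none
  else if Odd d ∧ ∀ i ≤ k, b i = none ∨ ∃ c, b i = some c ∧ d < c then b
  else if Odd d then
    let j := Nat.findGreatest (fun j' => ∃ c, b j' = some c ∧ c ≤ d) k
    fun i => if j < i then b i else if i = j ∧ j ≠ 0 then some d else none
  else if ∃ i ≤ k, ∃ c, b i = some c ∧ Odd c ∧ c < d then
    let j := Nat.findGreatest (fun j' => ∃ c, b j' = some c ∧ Odd c ∧ c < d) k
    fun i => if j ≤ i then (if ∃ c, b i = some c ∧ c < d then some d else b i)
             else if i = 0 then some d else none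
  else if h : ∃ i, i ≤ k ∧ ¬ ∃ c, b i = some c ∧ Even c then
    let j := Nat.find h
    fun i => if j < i then (if ∃ c, b i = some c ∧ c ≤ d then some d else b i)
             else if i = j then some d else none
  else fun i => if ∃ c, b i = some c ∧ c ≤ d then some d else b i

/-- The colour-witness update `up₊(b,d)`: `ru₊(b,d)` if `val(ru₊(b,d)) ≤ e`, and `WON`
otherwise; moreover `up₊(WON,d) = WON`. -/
noncomputable def upP (k hi e : ℕ) : St → ℕ → St
  | none, _ => none
  | some b, d => if valw k (ruP k hi b d) ≤ e then some (ruP k hi b d) else none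

/-- Membership in `ℂ`, the set of concise witnesses: sequences over `C_⊥` that are ordered,
concise (each odd colour occurs at most once and `b_0` is not odd) and of value at most `e`. -/
def memC (lo hi e k : ℕ) (b : Wit) : Prop :=
  (∀ i ≤ k, b i = none ∨ ∃ c, b i = some c ∧ CminusMem lo hi c) ∧
  (∀ i j, j < i → i ≤ k → ∀ ci cj, b i = some ci → b j = some cj → cj ≤ ci) ∧
  (∀ o, Odd o → ∀ i j, i ≤ k → j ≤ k → i ≠ j → b i = some o → ¬ b j = some o) ∧
  (∀ c, b 0 = some c → ¬ Odd c) ∧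
  valw k b ≤ e

/-- The state `s` belongs to `ℂ ∪ {WON}`. -/
def memCW (lo hi e k : ℕ) (s : St) : Prop :=
  s = none ∨ ∃ b, s = some b ∧ memC lo hi e k b

/-- The antagonistic update built from an update function `f`:
`min_⊒ { f(c,d) : c ∈ ℂ ∪ {WON}, c ⊒ b }`, with `au(WON,d) = WON`. -/
noncomputable def antag (lo hi e k : ℕ) (f : St → ℕ → St) (s : St) (d : ℕ) : St :=
  match s with
  | none => none
  | some b =>
    if h : ∃ x : St, (∃ c : St, memCW lo hi e k c ∧ stGe k c (some b) ∧ f c d = x) ∧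
        ∀ y : St, (∃ c : St, memCW lo hi e k c ∧ stGe k c (some b) ∧ f c d = y) → stGe k y x
    then h.choose else none

/-- The antagonistic update `au(b,d) = min_⊒ { up(c,d) : c ∈ ℂ ∪ {WON}, c ⊒ b }`. -/
noncomputable def auC (lo hi e k : ℕ) : St → ℕ → St := antag lo hi e k (upC k hi e)

/-- The antagonistic update `au₊(b,d) = min_⊒ { up₊(c,d) : c ∈ ℂ ∪ {WON}, c ⊒ b }`. -/
noncomputable def auP (lo hi e k : ℕ) : St → ℕ → St := antag lo hi e k (upP k hi e)


section Helpers

lemma colGe_none (x : Option ℕ) : colGe x none := by cases x <;> trivial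

lemma colGe_refl (x : Option ℕ) : colGe x x := by
  cases x with
  | none => trivial
  | some a =>
    rcases Nat.even_or_odd a with h | h
    · exact Or.inl ⟨h, Or.inr le_rfl⟩
    · exact Or.inr ⟨h, h, le_rfl⟩

lemma colGe_total (x y : Option ℕ) : colGe x y ∨ colGe y x := by
  cases x with
  | none => exact Or.inr (colGe_none _)
  | some a =>
    cases y with
    | none => exact Or.inl (colGe_none _)
    | some b =>
      rcases Nat.even_or_odd a with ha | ha <;> rcases Nat.even_or_odd b with hb | hb
      · rcases le_total b a with h | h
        · exact Or.inl (Or.inl ⟨ha, Or.inr h⟩)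
        · exact Or.inr (Or.inl ⟨hb, Or.inr h⟩)
      · exact Or.inl (Or.inl ⟨ha, Or.inl hb⟩)
      · exact Or.inr (Or.inl ⟨hb, Or.inl ha⟩)
      · rcases le_total a b with h | h
        · exact Or.inl (Or.inr ⟨ha, hb, h⟩)
        · exact Or.inr (Or.inr ⟨hb, ha, h⟩)

lemma colGe_some_iff (a b : ℕ) : colGe (some a) (some b) ↔
    (a % 2 = 0 ∧ (b % 2 = 1 ∨ b ≤ a)) ∨ (a % 2 = 1 ∧ b % 2 = 1 ∧ a ≤ b) := by
  simp [colGe, Nat.even_iff, Nat.odd_iff]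

lemma colGe_antisymm {x y : Option ℕ} (h1 : colGe x y) (h2 : colGe y x) : x = y := by
  cases x with
  | none => cases y with
    | none => rfl
    | some b => exact absurd h1 (by simp [colGe])
  | some a =>
    cases y with
    | none => exact absurd h2 (by simp [colGe])
    | some b =>
      rw [colGe_some_iff] at h1 h2
      exact congrArg some (by omega)

lemma colGe_trans {x y z : Option ℕ} (h1 : colGe x y) (h2 : colGe y z) : colGe x z := by
  cases x with
  | none =>
    cases y with
    | none => exact h2
    | some b => exact absurd h1 (by simp [colGe])
  | some a =>
    cases z with
    | none => exact colGe_none _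
    | some c =>
      cases y with
      | none => exact absurd h2 (by simp [colGe])
      | some b =>
        rw [colGe_some_iff] at h1 h2 ⊢
        omega

lemma seqGe_of_eq {k : ℕ} {a b : Wit} (h : ∀ i ≤ k, a i = b i) : seqGe k a b := Or.inl h

lemma seqGe_refl (k : ℕ) (a : Wit) : seqGe k a a := Or.inl fun _ _ => rfl

/-- There is a topmost index (at most `k`) where `a` and `b` differ, unless they agree. -/
lemma exists_top_diff {k : ℕ} {a b : Wit} (h : ¬ ∀ i ≤ k, a i = b i) :
    ∃ i ≤ k, a i ≠ b i ∧ ∀ i', i < i' → i' ≤ k → a i' = b i' := by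
  classical
  have hne : ((Finset.range (k+1)).filter (fun i => a i ≠ b i)).Nonempty := by
    push_neg at h
    obtain ⟨i, hi, hne⟩ := h
    exact ⟨i, Finset.mem_filter.mpr ⟨Finset.mem_range.mpr (by omega), hne⟩⟩
  set D := (Finset.range (k+1)).filter (fun i => a i ≠ b i)
  have hmem := Finset.mem_filter.mp (D.max'_mem hne)
  refine ⟨D.max' hne, by have := Finset.mem_range.mp hmem.1; omega, hmem.2, ?_⟩
  intro i' hlt hle
  by_contra hcon
  have : i' ∈ D := Finset.mem_filter.mpr ⟨Finset.mem_range.mpr (by omega), hcon⟩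
  exact absurd (D.le_max' _ this) (by omega)

/-- If `a` and `b` agree on `[Q, k]` and `b` is blank below `Q`, then `a ⊒ b`. -/
lemma seqGe_of_agree_above {k Q : ℕ} {a b : Wit}
    (hag : ∀ i, Q ≤ i → i ≤ k → a i = b i) (hb : ∀ i < Q, b i = none) : seqGe k a b := by
  by_cases hall : ∀ i ≤ k, a i = b i
  · exact Or.inl hall
  · obtain ⟨i, hik, hne, habove⟩ := exists_top_diff hall
    have hQ : i < Q := by
      by_contra hc
      exact hne (hag _ (by omega) hik)
    right
    exact ⟨i, hik, habove, by rw [hb _ hQ]; exact colGe_none _, hne⟩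

lemma seqGe_total (k : ℕ) (a b : Wit) : seqGe k a b ∨ seqGe k b a := by
  by_cases hall : ∀ i ≤ k, a i = b i
  · exact Or.inl (Or.inl hall)
  · obtain ⟨i, hik, hne, habove⟩ := exists_top_diff hall
    rcases colGe_total (a i) (b i) with h | h
    · exact Or.inl (Or.inr ⟨i, hik, habove, h, hne⟩)
    · exact Or.inr (Or.inr ⟨i, hik, fun i' h1 h2 => (habove i' h1 h2).symm, h,
        fun hc => hne hc.symm⟩)

lemma seqGe_trans {k : ℕ} {a b c : Wit} (h1 : seqGe k a b) (h2 : seqGe k b c) :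
    seqGe k a c := by
  rcases h1 with h1 | ⟨i1, hi1, hab1, hcol1, hne1⟩
  · rcases h2 with h2 | ⟨i2, hi2, hab2, hcol2, hne2⟩
    · exact Or.inl fun i hi => (h1 i hi).trans (h2 i hi)
    · exact Or.inr ⟨i2, hi2, fun i' h1' h2' => (h1 i' h2').trans (hab2 i' h1' h2'),
        by rw [h1 i2 hi2]; exact hcol2, by rw [h1 i2 hi2]; exact hne2⟩
  · rcases h2 with h2 | ⟨i2, hi2, hab2, hcol2, hne2⟩
    · exact Or.inr ⟨i1, hi1, fun i' h1' h2' => (hab1 i' h1' h2').trans (h2 i' h2'),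
        by rw [← h2 i1 hi1]; exact hcol1, by rw [← h2 i1 hi1]; exact hne1⟩
    · rcases lt_trichotomy i1 i2 with hlt | heq | hgt
      · refine Or.inr ⟨i2, hi2, fun i' h1' h2' => (hab1 i' (by omega) h2').trans (hab2 i' h1' h2'),
          ?_, ?_⟩
        · rw [hab1 i2 hlt hi2]; exact hcol2
        · rw [hab1 i2 hlt hi2]; exact hne2
      · subst heq
        refine Or.inr ⟨i1, hi1, fun i' h1' h2' => (hab1 i' h1' h2').trans (hab2 i' h1' h2'),
          colGe_trans hcol1 hcol2, ?_⟩
        intro hac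
        rw [hac] at hcol1
        exact hne2 (colGe_antisymm hcol2 hcol1)
      · refine Or.inr ⟨i1, hi1, fun i' h1' h2' => (hab1 i' h1' h2').trans (hab2 i' (by omega) h2'),
          ?_, ?_⟩
        · rw [← hab2 i1 hgt hi1]; exact hcol1
        · rw [← hab2 i1 hgt hi1]; exact hne1

lemma stGe_refl (k : ℕ) (s : St) : stGe k s s := by
  cases s with
  | none => trivial
  | some a => exact seqGe_refl k a

lemma stGe_trans {k : ℕ} {x y z : St} (h1 : stGe k x y) (h2 : stGe k y z) : stGe k x z := by
  cases x with
  | none => trivial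
  | some a =>
    cases y with
    | none => exact absurd h1 (by simp [stGe])
    | some b =>
      cases z with
      | none => exact absurd h2 (by simp [stGe])
      | some c => exact seqGe_trans h1 h2

lemma stGe_total (k : ℕ) (x y : St) : stGe k x y ∨ stGe k y x := by
  cases x with
  | none => exact Or.inl trivial
  | some a =>
    cases y with
    | none => exact Or.inr trivial
    | some b => exact seqGe_total k a b

lemma mem_evenIdx {k : ℕ} {b : Wit} {i : ℕ} :
    i ∈ evenIdx k b ↔ i ≤ k ∧ ∃ c, b i = some c ∧ Even c := by
  simp [evenIdx, Nat.lt_succ_iff]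

lemma mem_oddIdx {k : ℕ} {b : Wit} {i : ℕ} :
    i ∈ oddIdx k b ↔ i ≤ k ∧ ∃ c, b i = some c ∧ Odd c := by
  simp [oddIdx, Nat.lt_succ_iff]

lemma evenIdx_congr {k : ℕ} {a b : Wit} (h : ∀ i ≤ k, a i = b i) : evenIdx k a = evenIdx k b := by
  ext i
  simp only [mem_evenIdx]
  constructor <;> rintro ⟨hik, hc⟩ <;> refine ⟨hik, ?_⟩
  · rwa [← h i hik]
  · rwa [h i hik]

lemma oddIdx_congr {k : ℕ} {a b : Wit} (h : ∀ i ≤ k, a i = b i) : oddIdx k a = oddIdx k b := by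
  ext i
  simp only [mem_oddIdx]
  constructor <;> rintro ⟨hik, hc⟩ <;> refine ⟨hik, ?_⟩
  · rwa [← h i hik]
  · rwa [h i hik]

lemma valw_congr {k : ℕ} {a b : Wit} (h : ∀ i ≤ k, a i = b i) : valw k a = valw k b := by
  unfold valw evenodd
  rw [evenIdx_congr h, oddIdx_congr h]

/-- If `a` and `b` agree on `[Q, k]`, `b` is blank below `Q` and `a` has only even entries
below `Q`, then `val(b) ≤ val(a)`. -/
lemma valw_le_valw {k Q : ℕ} {a b : Wit}
    (hag : ∀ i, Q ≤ i → i ≤ k → a i = b i)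
    (hbnone : ∀ i < Q, b i = none)
    (haev : ∀ i < Q, ∀ c, a i = some c → Even c) :
    valw k b ≤ valw k a := by
  have hodd : oddIdx k a = oddIdx k b := by
    ext i
    simp only [mem_oddIdx]
    constructor
    · rintro ⟨hik, c, hc, hoc⟩
      have hQ : Q ≤ i := by
        by_contra hlt
        exact (Nat.not_odd_iff_even.mpr (haev i (by omega) c hc)) hoc
      exact ⟨hik, c, by rw [← hag i hQ hik]; exact hc, hoc⟩
    · rintro ⟨hik, c, hc, hoc⟩
      have hQ : Q ≤ i := by
        by_contra hlt
        rw [hbnone i (by omega)] at hc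
        exact nomatch hc
      exact ⟨hik, c, by rw [hag i hQ hik]; exact hc, hoc⟩
  unfold valw evenodd
  rw [hodd]
  by_cases hne : (oddIdx k b).Nonempty
  · rw [dif_pos hne, dif_pos hne]
    have hQm : Q ≤ (oddIdx k b).max' hne := by
      have := (oddIdx k b).max'_mem hne
      rw [mem_oddIdx] at this
      obtain ⟨hik, c, hc, _⟩ := this
      by_contra hlt
      rw [hbnone _ (by omega)] at hc
      exact nomatch hc
    have hfil : (evenIdx k a).filter (fun i => (oddIdx k b).max' hne < i) =
        (evenIdx k b).filter (fun i => (oddIdx k b).max' hne < i) := by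
      ext i
      simp only [Finset.mem_filter, mem_evenIdx]
      constructor
      · rintro ⟨⟨hik, c, hc, hec⟩, hlt⟩
        exact ⟨⟨hik, c, by rw [← hag i (by omega) hik]; exact hc, hec⟩, hlt⟩
      · rintro ⟨⟨hik, c, hc, hec⟩, hlt⟩
        exact ⟨⟨hik, c, by rw [hag i (by omega) hik]; exact hc, hec⟩, hlt⟩
    rw [hfil]
  · rw [dif_neg hne, dif_neg hne]
    apply Finset.sum_le_sum_of_subset
    intro i hi
    rw [mem_evenIdx] at hi ⊢
    obtain ⟨hik, c, hc, hec⟩ := hi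
    have hQ : Q ≤ i := by
      by_contra hlt
      rw [hbnone i (by omega)] at hc
      exact nomatch hc
    exact ⟨hik, c, by rw [hag i hQ hik]; exact hc, hec⟩

/-- If `a` and `b` agree on `[o, k]` and both carry an odd colour at `o`,
then `val(a) = val(b)`. -/
lemma valw_eq_of_odd_at {k o : ℕ} {a b : Wit} (hok : o ≤ k)
    (hag : ∀ i, o ≤ i → i ≤ k → a i = b i)
    (hodd : ∃ c, a o = some c ∧ Odd c) :
    valw k a = valw k b := by
  have hoa : o ∈ oddIdx k a := mem_oddIdx.mpr ⟨hok, hodd⟩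
  have hob : o ∈ oddIdx k b := by
    rw [mem_oddIdx]
    obtain ⟨c, hc, hoc⟩ := hodd
    exact ⟨hok, c, by rw [← hag o le_rfl hok]; exact hc, hoc⟩
  have hnea : (oddIdx k a).Nonempty := ⟨o, hoa⟩
  have hneb : (oddIdx k b).Nonempty := ⟨o, hob⟩
  have hma : o ≤ (oddIdx k a).max' hnea := Finset.le_max' _ _ hoa
  have hmb : o ≤ (oddIdx k b).max' hneb := Finset.le_max' _ _ hob
  have hmax : (oddIdx k a).max' hnea = (oddIdx k b).max' hneb := by
    apply le_antisymm
    · apply Finset.le_max'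
      have hmem := (oddIdx k a).max'_mem hnea
      rw [mem_oddIdx] at hmem ⊢
      obtain ⟨hik, c, hc, hoc⟩ := hmem
      exact ⟨hik, c, by rw [← hag _ hma hik]; exact hc, hoc⟩
    · apply Finset.le_max'
      have hmem := (oddIdx k b).max'_mem hneb
      rw [mem_oddIdx] at hmem ⊢
      obtain ⟨hik, c, hc, hoc⟩ := hmem
      exact ⟨hik, c, by rw [hag _ hmb hik]; exact hc, hoc⟩
  have hfil : (evenIdx k a).filter (fun i => (oddIdx k a).max' hnea < i) =
      (evenIdx k b).filter (fun i => (oddIdx k b).max' hneb < i) := by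
    ext i
    simp only [Finset.mem_filter, mem_evenIdx, ← hmax]
    constructor
    · rintro ⟨⟨hik, c, hc, hec⟩, hlt⟩
      exact ⟨⟨hik, c, by rw [← hag i (by omega) hik]; exact hc, hec⟩, hlt⟩
    · rintro ⟨⟨hik, c, hc, hec⟩, hlt⟩
      exact ⟨⟨hik, c, by rw [hag i (by omega) hik]; exact hc, hec⟩, hlt⟩
  unfold valw evenodd
  rw [dif_pos hnea, dif_pos hneb, hfil, hmax]

/-- `Nat.findGreatest` satisfies the predicate as soon as the predicate has a witness `≤ k`. -/
lemma findGreatest_spec' {P : ℕ → Prop} [DecidablePred P] {k : ℕ}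
    (h : ∃ m, m ≤ k ∧ P m) : P (Nat.findGreatest P k) := by
  obtain ⟨m, hmk, hPm⟩ := h
  exact Nat.findGreatest_spec hmk hPm

/-- If each odd colour occurs at most once in `w` (among indices `≤ k`),
then `↓₁w = w`. -/
lemma trunc_eq_self {k : ℕ} {w : Wit}
    (h : ∀ o, Odd o → ∀ i i', i < i' → i' ≤ k → w i = some o → w i' ≠ some o) :
    ∀ i, trunc k w i = w i := by
  intro i
  unfold trunc
  cases hw : w i with
  | none => simp
  | some o =>
    simp only []
    rw [if_neg]
    rintro ⟨ho, i', h1, h2, h3⟩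
    exact h o ho i i' h1 h2 hw h3

section BranchEq

variable {k hi : ℕ} {b : Wit} {d : ℕ}

lemma ruC_won (h1 : Odd d ∧ d = hi) : ruC k hi b d = fun _ => none := by
  unfold ruC; rw [if_pos h1]

lemma ruP_won (h1 : Odd d ∧ d = hi) : ruP k hi b d = fun _ => none := by
  unfold ruP; rw [if_pos h1]

lemma ruC_id (h1 : ¬(Odd d ∧ d = hi))
    (h2 : (Odd d ∧ ∀ i ≤ k, b i = none ∨ ∃ c, b i = some c ∧ d ≤ c)
       ∨ (Even d ∧ ∀ i ≤ k, ∃ c, b i = some c ∧ Even c ∧ d ≤ c)) :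
    ruC k hi b d = b := by
  unfold ruC; rw [if_neg h1, if_pos h2]

lemma ruP_id (h1 : ¬(Odd d ∧ d = hi))
    (h2 : Odd d ∧ ∀ i ≤ k, b i = none ∨ ∃ c, b i = some c ∧ d < c) :
    ruP k hi b d = b := by
  unfold ruP; rw [if_neg h1, if_pos h2]

lemma ruC_odd (h1 : ¬(Odd d ∧ d = hi))
    (h2 : ¬((Odd d ∧ ∀ i ≤ k, b i = none ∨ ∃ c, b i = some c ∧ d ≤ c)
       ∨ (Even d ∧ ∀ i ≤ k, ∃ c, b i = some c ∧ Even c ∧ d ≤ c)))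
    (h3 : Odd d) :
    ruC k hi b d = fun i =>
      if Nat.findGreatest (fun j' => ∃ c, b j' = some c ∧ c < d) k < i then b i
      else if i = Nat.findGreatest (fun j' => ∃ c, b j' = some c ∧ c < d) k ∧
          Nat.findGreatest (fun j' => ∃ c, b j' = some c ∧ c < d) k ≠ 0 then some d
      else none := by
  unfold ruC; rw [if_neg h1, if_neg h2, if_pos h3]

lemma ruP_odd (h1 : ¬(Odd d ∧ d = hi))
    (h2 : ¬(Odd d ∧ ∀ i ≤ k, b i = none ∨ ∃ c, b i = some c ∧ d < c))
    (h3 : Odd d) :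
    ruP k hi b d = fun i =>
      if Nat.findGreatest (fun j' => ∃ c, b j' = some c ∧ c ≤ d) k < i then b i
      else if i = Nat.findGreatest (fun j' => ∃ c, b j' = some c ∧ c ≤ d) k ∧
          Nat.findGreatest (fun j' => ∃ c, b j' = some c ∧ c ≤ d) k ≠ 0 then some d
      else none := by
  unfold ruP; rw [if_neg h1, if_neg h2, if_pos h3]

lemma ruC_even (h1 : ¬(Odd d ∧ d = hi))
    (h2 : ¬((Odd d ∧ ∀ i ≤ k, b i = none ∨ ∃ c, b i = some c ∧ d ≤ c)
       ∨ (Even d ∧ ∀ i ≤ k, ∃ c, b i = some c ∧ Even c ∧ d ≤ c)))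
    (h3 : ¬Odd d) :
    ruC k hi b d = fun i =>
      if max (Nat.findGreatest (fun j' => ∃ c, b j' = some c ∧ c < d) k)
          (if h : ∃ j', j' ≤ k ∧ ¬ ∃ c, b j' = some c ∧ Even c then Nat.find h else 0) < i
      then b i
      else if i = max (Nat.findGreatest (fun j' => ∃ c, b j' = some c ∧ c < d) k)
          (if h : ∃ j', j' ≤ k ∧ ¬ ∃ c, b j' = some c ∧ Even c then Nat.find h else 0)
      then some d else none := by
  unfold ruC; rw [if_neg h1, if_neg h2, if_neg h3]

lemma ruP_evodd (h1 : ¬(Odd d ∧ d = hi))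
    (h3 : ¬Odd d)
    (h4 : ∃ i ≤ k, ∃ c, b i = some c ∧ Odd c ∧ c < d) :
    ruP k hi b d = fun i =>
      if Nat.findGreatest (fun j' => ∃ c, b j' = some c ∧ Odd c ∧ c < d) k ≤ i
      then (if ∃ c, b i = some c ∧ c < d then some d else b i)
      else if i = 0 then some d else none := by
  unfold ruP
  rw [if_neg h1, if_neg (fun h => h3 h.1), if_neg h3, if_pos h4]

lemma ruP_evfind (h1 : ¬(Odd d ∧ d = hi))
    (h3 : ¬Odd d)
    (h4 : ¬∃ i ≤ k, ∃ c, b i = some c ∧ Odd c ∧ c < d)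
    (h5 : ∃ i, i ≤ k ∧ ¬ ∃ c, b i = some c ∧ Even c) :
    ruP k hi b d = fun i =>
      if Nat.find h5 < i then (if ∃ c, b i = some c ∧ c ≤ d then some d else b i)
      else if i = Nat.find h5 then some d else none := by
  unfold ruP
  rw [if_neg h1, if_neg (fun h => h3 h.1), if_neg h3, if_neg h4, dif_pos h5]

lemma ruP_evall (h1 : ¬(Odd d ∧ d = hi))
    (h3 : ¬Odd d)
    (h4 : ¬∃ i ≤ k, ∃ c, b i = some c ∧ Odd c ∧ c < d)
    (h5 : ¬∃ i, i ≤ k ∧ ¬ ∃ c, b i = some c ∧ Even c) :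
    ruP k hi b d = fun i =>
      if ∃ c, b i = some c ∧ c ≤ d then some d else b i := by
  unfold ruP
  rw [if_neg h1, if_neg (fun h => h3 h.1), if_neg h3, if_neg h4, dif_neg h5]

end BranchEq

lemma trunc_none {k : ℕ} {w : Wit} {i : ℕ} (hw : w i = none) : trunc k w i = none := by
  unfold trunc; rw [hw]

lemma trunc_some {k : ℕ} {w : Wit} {i o : ℕ} (hw : w i = some o)
    (h : ¬(Odd o ∧ ∃ i', i < i' ∧ i' ≤ k ∧ w i' = some o)) : trunc k w i = some o := by
  unfold trunc; rw [hw]; exact if_neg h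

lemma trunc_dup {k : ℕ} {w : Wit} {i o : ℕ} (hw : w i = some o)
    (h : Odd o ∧ ∃ i', i < i' ∧ i' ≤ k ∧ w i' = some o) : trunc k w i = none := by
  unfold trunc; rw [hw]; exact if_pos h

/-- For odd `d`, the colour-witness raw update agrees with the truncated classic raw update
on all indices `≤ k`, and the values agree. -/
lemma ru_main_odd {lo hi e k : ℕ} {b : Wit} {d : ℕ} (hb : memC lo hi e k b)
    (hod : Odd d) :
    (∀ i ≤ k, ruP k hi b d i = trunc k (ruC k hi b d) i) ∧
      valw k (ruC k hi b d) ≤ valw k (ruP k hi b d) := by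
  obtain ⟨hmem, hord, huniq, h0, hval⟩ := hb
  by_cases hdh : d = hi
  · rw [ruC_won ⟨hod, hdh⟩, ruP_won ⟨hod, hdh⟩]
    exact ⟨fun i hi' => (trunc_none rfl).symm, le_rfl⟩
  have h1 : ¬(Odd d ∧ d = hi) := fun h => hdh h.2
  have htrb : ∀ i, trunc k b i = b i :=
    trunc_eq_self (fun o ho i i' hlt hik hbi =>
      huniq o ho i i' (by omega) hik (by omega) hbi)
  by_cases hAll : ∀ i ≤ k, b i = none ∨ ∃ c, b i = some c ∧ d ≤ c
  · have hC2 : (Odd d ∧ ∀ i ≤ k, b i = none ∨ ∃ c, b i = some c ∧ d ≤ c)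
       ∨ (Even d ∧ ∀ i ≤ k, ∃ c, b i = some c ∧ Even c ∧ d ≤ c) := Or.inl ⟨hod, hAll⟩
    rw [ruC_id h1 hC2]
    by_cases hAllP : ∀ i ≤ k, b i = none ∨ ∃ c, b i = some c ∧ d < c
    · rw [ruP_id h1 ⟨hod, hAllP⟩]
      exact ⟨fun i hi' => (htrb i).symm, le_rfl⟩
    · -- `b` contains `d` at a position `P`, and nothing below `P`.
      push_neg at hAllP
      obtain ⟨P, hPk, hPne, hPc⟩ := hAllP
      obtain ⟨c0, hc0⟩ := Option.ne_none_iff_exists'.mp hPne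
      have hP : b P = some d := by
        rcases hAll P hPk with h | ⟨c, hc, hdc⟩
        · exact absurd h hPne
        · rw [hc0] at hc
          injection hc with hcc
          subst hcc
          have h2 := hPc c0 hc0
          have : c0 = d := by omega
          rw [this] at hc0
          exact hc0
      have hP0 : P ≠ 0 := by
        rintro rfl
        exact h0 d hP hod
      have h2P : ¬(Odd d ∧ ∀ i ≤ k, b i = none ∨ ∃ c, b i = some c ∧ d < c) := by
        rintro ⟨-, hall⟩
        rcases hall P hPk with h | ⟨c, hc, hdc⟩
        · exact hPne h
        · rw [hP] at hc; injection hc with hcc; omega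
      have hjPeq : Nat.findGreatest (fun j' => ∃ c, b j' = some c ∧ c ≤ d) k = P := by
        have hle : P ≤ Nat.findGreatest (fun j' => ∃ c, b j' = some c ∧ c ≤ d) k :=
          Nat.le_findGreatest hPk ⟨d, hP, le_rfl⟩
        have hjk : Nat.findGreatest (fun j' => ∃ c, b j' = some c ∧ c ≤ d) k ≤ k :=
          Nat.findGreatest_le k
        obtain ⟨c1, hc1, hc1d⟩ :=
          findGreatest_spec' (P := fun j' => ∃ c, b j' = some c ∧ c ≤ d)
            ⟨P, hPk, d, hP, le_rfl⟩
        have hc1eq : c1 = d := by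
          rcases hAll _ hjk with h | ⟨c, hc, hdc⟩
          · rw [h] at hc1; exact nomatch hc1
          · rw [hc] at hc1; injection hc1 with hcc; omega
        subst hc1eq
        by_contra hne
        exact huniq c1 hod _ P hjk hPk hne hc1 hP
      have hbelow : ∀ i < P, b i = none := by
        intro i hiP
        cases hbi : b i with
        | none => rfl
        | some c =>
          exfalso
          rcases hAll i (by omega) with h | ⟨c', hc', hdc'⟩
          · rw [hbi] at h; exact nomatch h
          · rw [hbi] at hc'
            injection hc' with hcc
            subst hcc
            have hle := hord P i hiP hPk d c hP hbi
            have : c = d := by omega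
            subst this
            exact huniq c hod P i hPk (by omega) (by omega) hP hbi
      have hrp : ∀ i ≤ k, ruP k hi b d i = b i := by
        intro i hik
        simp only [ruP_odd h1 h2P hod]
        rw [hjPeq]
        rcases lt_trichotomy i P with hiP | hiP | hPi
        · rw [if_neg (show ¬ P < i by omega), if_neg (show ¬(i = P ∧ P ≠ 0) by omega),
            hbelow i hiP]
        · rw [if_neg (show ¬ P < i by omega), if_pos ⟨hiP, hP0⟩, hiP, hP]
        · rw [if_pos hPi]
      exact ⟨fun i hik => (hrp i hik).trans (htrb i).symm, (valw_congr hrp).ge⟩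
  · -- some entry of `b` is a colour `< d`
    have hC2 : ¬((Odd d ∧ ∀ i ≤ k, b i = none ∨ ∃ c, b i = some c ∧ d ≤ c)
       ∨ (Even d ∧ ∀ i ≤ k, ∃ c, b i = some c ∧ Even c ∧ d ≤ c)) := by
      rintro (⟨-, h⟩ | ⟨hev, -⟩)
      · exact hAll h
      · exact (Nat.not_odd_iff_even.mpr hev) hod
    push_neg at hAll
    obtain ⟨w, hwk, hwne, hwc⟩ := hAll
    obtain ⟨cw, hcw⟩ := Option.ne_none_iff_exists'.mp hwne
    have hcwd : cw < d := by have := hwc cw hcw; omega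
    have hex : ∃ m, m ≤ k ∧ ∃ c, b m = some c ∧ c < d := ⟨w, hwk, cw, hcw, hcwd⟩
    set Q := Nat.findGreatest (fun j' => ∃ c, b j' = some c ∧ c < d) k with hQdef
    obtain ⟨cQ, hcQ, hcQd⟩ : ∃ c, b Q = some c ∧ c < d := findGreatest_spec' hex
    have hQk : Q ≤ k := Nat.findGreatest_le k
    have hQgr : ∀ i, Q < i → i ≤ k → ¬∃ c, b i = some c ∧ c < d := by
      intro i h1' h2'
      rw [hQdef] at h1'
      exact Nat.findGreatest_is_greatest h1' h2'
    have h2P : ¬(Odd d ∧ ∀ i ≤ k, b i = none ∨ ∃ c, b i = some c ∧ d < c) := by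
      rintro ⟨-, hall⟩
      rcases hall Q hQk with h | ⟨c, hc, hdc⟩
      · rw [hcQ] at h; exact nomatch h
      · rw [hcQ] at hc; injection hc with hcc; omega
    have hrc : ∀ i, ruC k hi b d i =
        if Q < i then b i else if i = Q ∧ Q ≠ 0 then some d else none := by
      intro i; rw [ruC_odd h1 hC2 hod, ← hQdef]
    by_cases hPex : ∃ p, p ≤ k ∧ b p = some d
    · -- `b` contains `d` at position `P > Q`
      obtain ⟨P, hPk, hP⟩ := hPex
      have hP0 : P ≠ 0 := by rintro rfl; exact h0 d hP hod
      have hQP : Q < P := by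
        rcases lt_trichotomy P Q with h | h | h
        · have := hord Q P h hQk cQ d hcQ hP; omega
        · subst h; rw [hP] at hcQ; injection hcQ with hcc; omega
        · exact h
      have hjPeq : Nat.findGreatest (fun j' => ∃ c, b j' = some c ∧ c ≤ d) k = P := by
        have hle : P ≤ Nat.findGreatest (fun j' => ∃ c, b j' = some c ∧ c ≤ d) k :=
          Nat.le_findGreatest hPk ⟨d, hP, le_rfl⟩
        have hjk : Nat.findGreatest (fun j' => ∃ c, b j' = some c ∧ c ≤ d) k ≤ k :=
          Nat.findGreatest_le k
        obtain ⟨c1, hc1, hc1d⟩ :=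
          findGreatest_spec' (P := fun j' => ∃ c, b j' = some c ∧ c ≤ d)
            ⟨P, hPk, d, hP, le_rfl⟩
        by_contra hne
        have hlt : P < Nat.findGreatest (fun j' => ∃ c, b j' = some c ∧ c ≤ d) k := by
          omega
        have h3 := hord _ P hlt hjk c1 d hc1 hP
        have : c1 = d := by omega
        subst this
        exact huniq c1 hod _ P hjk hPk (by omega) hc1 hP
      have hrp : ∀ i, ruP k hi b d i =
          if P < i then b i else if i = P then some d else none := by
        intro i
        simp only [ruP_odd h1 h2P hod]
        rw [hjPeq]
        rcases lt_trichotomy i P with h | h | h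
        · rw [if_neg (show ¬ P < i by omega), if_neg (show ¬(i = P ∧ P ≠ 0) by omega),
            if_neg (show ¬ P < i by omega), if_neg (show ¬ i = P by omega)]
        · rw [if_neg (show ¬ P < i by omega), if_pos ⟨h, hP0⟩,
            if_neg (show ¬ P < i by omega), if_pos h]
        · rw [if_pos h, if_pos h]
      have hbet : ∀ i, Q < i → i < P → b i = none := by
        intro i h1' h2'
        cases hbi : b i with
        | none => rfl
        | some c =>
          exfalso
          have hle := hord P i h2' hPk d c hP hbi
          have hc : c = d := by
            rcases Nat.lt_or_ge c d with h | h
            · exact absurd ⟨c, hbi, h⟩ (hQgr i h1' (by omega))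
            · omega
          subst hc
          exact huniq c hod P i hPk (by omega) (by omega) hP hbi
      constructor
      · intro i hik
        rw [hrp i]
        rcases Nat.lt_or_ge P i with hPi | hiP
        · rw [if_pos hPi]
          cases hbo : b i with
          | none => rw [trunc_none (by rw [hrc i, if_pos (show Q < i by omega)]; exact hbo)]
          | some o =>
            rw [trunc_some (by rw [hrc i, if_pos (show Q < i by omega)]; exact hbo) ?_]
            rintro ⟨ho, i', hii', hi'k, hbi'⟩
            rw [hrc i', if_pos (show Q < i' by omega)] at hbi'
            exact huniq o ho i' i hi'k hik (by omega) hbi' hbo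
        · rw [if_neg (show ¬ P < i by omega)]
          rcases eq_or_lt_of_le hiP with rfl | hiP'
          · rw [if_pos rfl]
            rw [trunc_some (by rw [hrc i, if_pos (show Q < i by omega)]; exact hP) ?_]
            rintro ⟨-, i', hii', hi'k, hbi'⟩
            rw [hrc i', if_pos (show Q < i' by omega)] at hbi'
            exact huniq d hod i' i hi'k hik (by omega) hbi' hP
          · rw [if_neg (show ¬ i = P by omega)]
            rcases lt_trichotomy i Q with hiQ | hiQ | hQi
            · rw [trunc_none (by rw [hrc i, if_neg (show ¬ Q < i by omega),
                if_neg (show ¬(i = Q ∧ Q ≠ 0) by omega)])]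
            · by_cases hQ0 : Q = 0
              · rw [trunc_none (by rw [hrc i, if_neg (show ¬ Q < i by omega),
                  if_neg (show ¬(i = Q ∧ Q ≠ 0) by omega)])]
              · rw [trunc_dup (by rw [hrc i, if_neg (show ¬ Q < i by omega),
                  if_pos ⟨hiQ, hQ0⟩]) ⟨hod, P, hiP', hPk,
                  by rw [hrc P, if_pos (show Q < P by omega)]; exact hP⟩]
            · rw [trunc_none (by rw [hrc i, if_pos hQi]; exact hbet i hQi hiP')]
      · refine (valw_eq_of_odd_at (o := P) hPk ?_ ⟨d, ?_, hod⟩).ge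
        · intro i h1' h2'
          rw [hrp i, hrc i]
          rcases eq_or_lt_of_le h1' with hPi | h
          · rw [if_neg (show ¬ P < i by omega), if_pos hPi.symm, if_pos (show Q < i by omega),
              ← hPi, hP]
          · rw [if_pos h, if_pos (show Q < i by omega)]
        · rw [hrp P, if_neg (show ¬ P < P by omega), if_pos rfl]
    · -- `d` does not occur in `b`
      have hjPQ : Nat.findGreatest (fun j' => ∃ c, b j' = some c ∧ c ≤ d) k = Q := by
        apply le_antisymm
        · obtain ⟨c1, hc1, hc1d⟩ :=
            findGreatest_spec' (P := fun j' => ∃ c, b j' = some c ∧ c ≤ d)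
              ⟨w, hwk, cw, hcw, by omega⟩
          have hc1lt : c1 < d := by
            rcases eq_or_lt_of_le hc1d with h | h
            · exact absurd ⟨_, Nat.findGreatest_le k, by rw [h] at hc1; exact hc1⟩ hPex
            · exact h
          rw [hQdef]
          exact Nat.le_findGreatest (Nat.findGreatest_le k) ⟨c1, hc1, hc1lt⟩
        · exact Nat.le_findGreatest hQk ⟨cQ, hcQ, le_of_lt hcQd⟩
      have hrp : ∀ i, ruP k hi b d i =
          if Q < i then b i else if i = Q ∧ Q ≠ 0 then some d else none := by
        intro i; rw [ruP_odd h1 h2P hod, hjPQ]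
      have heq : ∀ i, ruP k hi b d i = ruC k hi b d i := fun i => by rw [hrp i, hrc i]
      have htr : ∀ i, trunc k (ruC k hi b d) i = ruC k hi b d i := by
        apply trunc_eq_self
        intro o ho i i' hlt hi'k hio hio'
        rw [hrc i'] at hio'
        rw [hrc i] at hio
        rcases lt_trichotomy i' Q with h | h | h
        · rw [if_neg (show ¬ Q < i' by omega), if_neg (show ¬(i' = Q ∧ Q ≠ 0) by omega)] at hio'
          exact nomatch hio'
        · rw [if_neg (show ¬ Q < i by omega), if_neg (show ¬(i = Q ∧ Q ≠ 0) by omega)] at hio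
          exact nomatch hio
        · rw [if_pos h] at hio'
          rcases lt_trichotomy i Q with h2 | h2 | h2
          · rw [if_neg (show ¬ Q < i by omega), if_neg (show ¬(i = Q ∧ Q ≠ 0) by omega)] at hio
            exact nomatch hio
          · by_cases h3 : Q = 0
            · rw [if_neg (show ¬ Q < i by omega), if_neg (show ¬(i = Q ∧ Q ≠ 0) by omega)] at hio
              exact nomatch hio
            · rw [if_neg (show ¬ Q < i by omega), if_pos ⟨h2, h3⟩] at hio
              injection hio with hio
              subst hio
              exact hPex ⟨i', hi'k, hio'⟩
          · rw [if_pos h2] at hio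
            exact huniq o ho i i' (by omega) hi'k (by omega) hio hio'
      exact ⟨fun i hik => (heq i).trans (htr i).symm, (valw_congr (fun i _ => heq i)).ge⟩

/-- For even `d`, the colour-witness raw update dominates the truncated classic raw update,
and the value of the classic update is at most that of the colour-witness update. -/
lemma ru_main_even {lo hi e k : ℕ} {b : Wit} {d : ℕ} (hb : memC lo hi e k b)
    (hev : Even d) :
    seqGe k (ruP k hi b d) (trunc k (ruC k hi b d)) ∧
      valw k (ruC k hi b d) ≤ valw k (ruP k hi b d) := by
  obtain ⟨hmem, hord, huniq, h0, hval⟩ := hb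
  have hodd : ¬ Odd d := Nat.not_odd_iff_even.mpr hev
  have h1 : ¬(Odd d ∧ d = hi) := fun h => hodd h.1
  have htrb : ∀ i, trunc k b i = b i :=
    trunc_eq_self (fun o ho i i' hlt hik hbi =>
      huniq o ho i i' (by omega) hik (by omega) hbi)
  by_cases hAE : ∀ i ≤ k, ∃ c, b i = some c ∧ Even c ∧ d ≤ c
  · -- every entry is an even colour `≥ d` : both updates fix `b`
    rw [ruC_id h1 (Or.inr ⟨hev, hAE⟩)]
    have hOltF : ¬∃ i ≤ k, ∃ c, b i = some c ∧ Odd c ∧ c < d := by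
      rintro ⟨i, hik, c, hc, hoc, -⟩
      obtain ⟨c', hc', hec', -⟩ := hAE i hik
      rw [hc] at hc'; injection hc' with h; subst h
      exact (Nat.not_odd_iff_even.mpr hec') hoc
    have hfindF : ¬∃ i, i ≤ k ∧ ¬∃ c, b i = some c ∧ Even c := by
      rintro ⟨i, hik, hne⟩
      obtain ⟨c, hc, hec, -⟩ := hAE i hik
      exact hne ⟨c, hc, hec⟩
    have hrp : ∀ i, ruP k hi b d i =
        if ∃ c, b i = some c ∧ c ≤ d then some d else b i :=
      fun i => by rw [ruP_evall h1 hodd hOltF hfindF]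
    have heq : ∀ i ≤ k, ruP k hi b d i = b i := by
      intro i hik
      rw [hrp i]
      by_cases hle : ∃ c, b i = some c ∧ c ≤ d
      · obtain ⟨c, hc, hcd⟩ := hle
        obtain ⟨c', hc', -, hdc'⟩ := hAE i hik
        rw [hc] at hc'; injection hc' with h; subst h
        have : c = d := by omega
        rw [if_pos ⟨c, hc, hcd⟩, hc, this]
      · rw [if_neg hle]
    exact ⟨seqGe_of_eq (fun i hik => (heq i hik).trans (htrb i).symm),
      (valw_congr heq).ge⟩
  · have hC2 : ¬((Odd d ∧ ∀ i ≤ k, b i = none ∨ ∃ c, b i = some c ∧ d ≤ c)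
       ∨ (Even d ∧ ∀ i ≤ k, ∃ c, b i = some c ∧ Even c ∧ d ≤ c)) := by
      rintro (⟨ho, -⟩ | ⟨-, h⟩)
      · exact hodd ho
      · exact hAE h
    set Q := Nat.findGreatest (fun j' => ∃ c, b j' = some c ∧ c < d) k with hQdef
    have hQk : Q ≤ k := Nat.findGreatest_le k
    have hnoPlt : ∀ i, Q < i → i ≤ k → ¬∃ c, b i = some c ∧ c < d := by
      intro i h1' h2'
      rw [hQdef] at h1'
      exact Nat.findGreatest_is_greatest h1' h2'
    -- generic truncation identity for the classic update
    have htrgen : ∀ (T : ℕ) (w : Wit),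
        (∀ i, w i = if T < i then b i else if i = T then some d else none) →
        ∀ i, trunc k w i = w i := by
      intro T w hw
      apply trunc_eq_self
      intro o ho i i' hlt hi'k hio hio'
      rw [hw i'] at hio'
      rw [hw i] at hio
      rcases lt_trichotomy i' T with h | h | h
      · rw [if_neg (show ¬ T < i' by omega), if_neg (show ¬ i' = T by omega)] at hio'
        exact nomatch hio'
      · rw [if_neg (show ¬ T < i' by omega), if_pos h] at hio'
        injection hio' with h2; subst h2
        exact hodd ho
      · rw [if_pos h] at hio'
        rcases lt_trichotomy i T with h2 | h2 | h2
        · rw [if_neg (show ¬ T < i by omega), if_neg (show ¬ i = T by omega)] at hio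
          exact nomatch hio
        · rw [if_neg (show ¬ T < i by omega), if_pos h2] at hio
          injection hio with h3; subst h3
          exact hodd ho
        · rw [if_pos h2] at hio
          exact huniq o ho i i' (by omega) hi'k (by omega) hio hio'
    by_cases hOlt : ∃ i ≤ k, ∃ c, b i = some c ∧ Odd c ∧ c < d
    · -- case (iv): some odd entry below `d`
      obtain ⟨iw, hiwk, cw, hcw, hocw, hcwd⟩ := hOlt
      have hOlt : ∃ i ≤ k, ∃ c, b i = some c ∧ Odd c ∧ c < d :=
        ⟨iw, hiwk, cw, hcw, hocw, hcwd⟩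
      set R := Nat.findGreatest (fun j' => ∃ c, b j' = some c ∧ Odd c ∧ c < d) k with hRdef
      obtain ⟨r, hr, hor, hrd⟩ : ∃ c, b R = some c ∧ Odd c ∧ c < d :=
        findGreatest_spec' (P := fun j' => ∃ c, b j' = some c ∧ Odd c ∧ c < d)
          ⟨iw, hiwk, cw, hcw, hocw, hcwd⟩
      have hRk : R ≤ k := Nat.findGreatest_le k
      have hR0 : R ≠ 0 := by rintro h; rw [h] at hr; exact h0 r hr hor
      have hRne : ¬∃ c, b R = some c ∧ Even c := by
        rintro ⟨c, hc, hec⟩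
        rw [hr] at hc; injection hc with h; subst h
        exact (Nat.not_odd_iff_even.mpr hec) hor
      have hfind : ∃ j', j' ≤ k ∧ ¬∃ c, b j' = some c ∧ Even c := ⟨R, hRk, hRne⟩
      have hJR : Nat.find hfind ≤ R := Nat.find_min' hfind ⟨hRk, hRne⟩
      have hRQ : R ≤ Q := by
        rw [hQdef, hRdef]
        exact Nat.le_findGreatest hRk ⟨r, hr, hrd⟩
      obtain ⟨q, hq, hqd⟩ : ∃ c, b Q = some c ∧ c < d :=
        findGreatest_spec' (P := fun j' => ∃ c, b j' = some c ∧ c < d) ⟨R, hRk, r, hr, hrd⟩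
      have hmax : max (Nat.findGreatest (fun j' => ∃ c, b j' = some c ∧ c < d) k)
          (Nat.find hfind) = Q := by
        rw [← hQdef]; omega
      have hrc : ∀ i, ruC k hi b d i =
          if Q < i then b i else if i = Q then some d else none :=
        fun i => by rw [ruC_even h1 hC2 hodd, dif_pos hfind, hmax]
      have hrp : ∀ i, ruP k hi b d i =
          if R ≤ i then (if ∃ c, b i = some c ∧ c < d then some d else b i)
          else if i = 0 then some d else none :=
        fun i => by rw [ruP_evodd h1 hodd hOlt, ← hRdef]
      have hag : ∀ i, Q ≤ i → i ≤ k →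
          ruP k hi b d i = (if Q < i then b i else if i = Q then some d else none) := by
        intro i h1' h2'
        rw [hrp i]
        rcases eq_or_lt_of_le h1' with h | h
        · rw [if_pos (show R ≤ i by omega), if_pos ⟨q, by rw [← h]; exact hq, hqd⟩,
            if_neg (show ¬ Q < i by omega), if_pos h.symm]
        · rw [if_pos (show R ≤ i by omega), if_neg (hnoPlt i h h2'), if_pos h]
      have hbel : ∀ i < Q, (if Q < i then b i else if i = Q then some d else none) = none :=
        fun i h' => by rw [if_neg (show ¬ Q < i by omega), if_neg (show ¬ i = Q by omega)]
      constructor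
      · refine seqGe_of_agree_above (Q := Q)
          (fun i h1' h2' => (hag i h1' h2').trans ((htrgen Q _ hrc i).trans (hrc i)).symm)
          (fun i h' => (htrgen Q _ hrc i).trans ((hrc i).trans (hbel i h')))
      · refine valw_le_valw (Q := Q)
          (fun i h1' h2' => (hag i h1' h2').trans (hrc i).symm)
          (fun i h' => (hrc i).trans (hbel i h')) ?_
        intro i h' c hc
        rw [hrp i] at hc
        by_cases hRi : R ≤ i
        · rw [if_pos hRi] at hc
          by_cases hplt : ∃ c, b i = some c ∧ c < d
          · rw [if_pos hplt] at hc; injection hc with h; subst h; exact hev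
          · rw [if_neg hplt] at hc
            have := hord Q i h' hQk q c hq hc
            exact absurd ⟨c, hc, by omega⟩ hplt
        · rw [if_neg hRi] at hc
          by_cases h0' : i = 0
          · rw [if_pos h0'] at hc; injection hc with h; subst h; exact hev
          · rw [if_neg h0'] at hc; exact nomatch hc
    · by_cases hfind : ∃ i, i ≤ k ∧ ¬∃ c, b i = some c ∧ Even c
      · -- case (v)
        have hJk : Nat.find hfind ≤ k := (Nat.find_spec hfind).1
        have hrp : ∀ i, ruP k hi b d i =
            if Nat.find hfind < i then
              (if ∃ c, b i = some c ∧ c ≤ d then some d else b i)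
            else if i = Nat.find hfind then some d else none :=
          fun i => by rw [ruP_evfind h1 hodd hOlt hfind]
        rcases Nat.lt_or_ge (Nat.find hfind) Q with hcmp | hcmp
        · -- J < Q : pivot Q
          have hQpos : 0 < Nat.findGreatest (fun j' => ∃ c, b j' = some c ∧ c < d) k := by
            rw [← hQdef]; omega
          obtain ⟨n, hn0, hnk, hPn⟩ := Nat.findGreatest_pos.mp hQpos
          obtain ⟨q, hq, hqd⟩ : ∃ c, b Q = some c ∧ c < d :=
            findGreatest_spec' (P := fun j' => ∃ c, b j' = some c ∧ c < d) ⟨n, hnk, hPn⟩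
          have hmax : max (Nat.findGreatest (fun j' => ∃ c, b j' = some c ∧ c < d) k)
              (Nat.find hfind) = Q := by
            rw [← hQdef]; omega
          have hrc : ∀ i, ruC k hi b d i =
              if Q < i then b i else if i = Q then some d else none :=
            fun i => by rw [ruC_even h1 hC2 hodd, dif_pos hfind, hmax]
          have hag : ∀ i, Q ≤ i → i ≤ k →
              ruP k hi b d i = (if Q < i then b i else if i = Q then some d else none) := by
            intro i h1' h2'
            rw [hrp i]
            rcases eq_or_lt_of_le h1' with h | h
            · rw [if_pos (show Nat.find hfind < i by omega),
                if_pos ⟨q, by rw [← h]; exact hq, le_of_lt hqd⟩,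
                if_neg (show ¬ Q < i by omega), if_pos h.symm]
            · rw [if_pos (show Nat.find hfind < i by omega), if_pos h]
              by_cases hple : ∃ c, b i = some c ∧ c ≤ d
              · obtain ⟨c, hc, hcd⟩ := hple
                have hcd' : c = d := by
                  rcases Nat.lt_or_ge c d with h' | h'
                  · exact absurd ⟨c, hc, h'⟩ (hnoPlt i h h2')
                  · omega
                rw [if_pos ⟨c, hc, hcd⟩, hc, hcd']
              · rw [if_neg hple]
          have hbel : ∀ i < Q,
              (if Q < i then b i else if i = Q then some d else none) = none :=
            fun i h' => by
              rw [if_neg (show ¬ Q < i by omega), if_neg (show ¬ i = Q by omega)]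
          constructor
          · exact seqGe_of_agree_above (Q := Q)
              (fun i h1' h2' => (hag i h1' h2').trans ((htrgen Q _ hrc i).trans (hrc i)).symm)
              (fun i h' => (htrgen Q _ hrc i).trans ((hrc i).trans (hbel i h')))
          · refine valw_le_valw (Q := Q)
              (fun i h1' h2' => (hag i h1' h2').trans (hrc i).symm)
              (fun i h' => (hrc i).trans (hbel i h')) ?_
            intro i h' c hc
            rw [hrp i] at hc
            by_cases hJi : Nat.find hfind < i
            · rw [if_pos hJi] at hc
              by_cases hple : ∃ c, b i = some c ∧ c ≤ d
              · rw [if_pos hple] at hc; injection hc with h; subst h; exact hev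
              · rw [if_neg hple] at hc
                have := hord Q i h' hQk q c hq hc
                exact absurd ⟨c, hc, by omega⟩ hple
            · rw [if_neg hJi] at hc
              by_cases h0' : i = Nat.find hfind
              · rw [if_pos h0'] at hc; injection hc with h; subst h; exact hev
              · rw [if_neg h0'] at hc; exact nomatch hc
        · -- Q ≤ J : pivot J
          have hmax : max (Nat.findGreatest (fun j' => ∃ c, b j' = some c ∧ c < d) k)
              (Nat.find hfind) = Nat.find hfind := by
            rw [← hQdef]; omega
          have hrc : ∀ i, ruC k hi b d i =
              if Nat.find hfind < i then b i
              else if i = Nat.find hfind then some d else none :=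
            fun i => by rw [ruC_even h1 hC2 hodd, dif_pos hfind, hmax]
          have hag : ∀ i, Nat.find hfind ≤ i → i ≤ k →
              ruP k hi b d i = (if Nat.find hfind < i then b i
                else if i = Nat.find hfind then some d else none) := by
            intro i h1' h2'
            rcases eq_or_lt_of_le h1' with h | h
            · have hL : ruP k hi b d i = some d := by
                rw [hrp i, if_neg (show ¬ Nat.find hfind < i by omega), if_pos h.symm]
              rw [hL, if_neg (show ¬ Nat.find hfind < i by omega), if_pos h.symm]
            · rw [hrp i, if_pos h, if_pos h]
              by_cases hple : ∃ c, b i = some c ∧ c ≤ d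
              · obtain ⟨c, hc, hcd⟩ := hple
                have hcd' : c = d := by
                  rcases Nat.lt_or_ge c d with h' | h'
                  · exact absurd ⟨c, hc, h'⟩ (hnoPlt i (by omega) h2')
                  · omega
                rw [if_pos ⟨c, hc, hcd⟩, hc, hcd']
              · rw [if_neg hple]
          have hbel : ∀ i < Nat.find hfind,
              (if Nat.find hfind < i then b i
                else if i = Nat.find hfind then some d else none) = none :=
            fun i h' => by
              rw [if_neg (show ¬ Nat.find hfind < i by omega),
                if_neg (show ¬ i = Nat.find hfind by omega)]
          constructor
          · exact seqGe_of_agree_above (Q := Nat.find hfind)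
              (fun i h1' h2' => (hag i h1' h2').trans
                ((htrgen _ _ hrc i).trans (hrc i)).symm)
              (fun i h' => (htrgen _ _ hrc i).trans ((hrc i).trans (hbel i h')))
          · refine valw_le_valw (Q := Nat.find hfind)
              (fun i h1' h2' => (hag i h1' h2').trans (hrc i).symm)
              (fun i h' => (hrc i).trans (hbel i h')) ?_
            intro i h' c hc
            rw [hrp i, if_neg (show ¬ Nat.find hfind < i by omega),
              if_neg (show ¬ i = Nat.find hfind by omega)] at hc
            exact nomatch hc
      · -- case (vi): all entries even
        push_neg at hfind
        have hallEv : ∀ i ≤ k, ∃ c, b i = some c ∧ Even c := hfind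
        have hexQ : ∃ m, m ≤ k ∧ ∃ c, b m = some c ∧ c < d := by
          push_neg at hAE
          obtain ⟨i0, hi0k, hi0⟩ := hAE
          obtain ⟨c0, hc0, hec0⟩ := hallEv i0 hi0k
          exact ⟨i0, hi0k, c0, hc0, hi0 c0 hc0 hec0⟩
        obtain ⟨q, hq, hqd⟩ : ∃ c, b Q = some c ∧ c < d := findGreatest_spec' hexQ
        have hfindF : ¬∃ i, i ≤ k ∧ ¬∃ c, b i = some c ∧ Even c := by
          rintro ⟨i, hik, hne⟩
          exact hne (hallEv i hik)
        have hmax : max (Nat.findGreatest (fun j' => ∃ c, b j' = some c ∧ c < d) k)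
            (if h : ∃ j', j' ≤ k ∧ ¬ ∃ c, b j' = some c ∧ Even c then Nat.find h else 0)
            = Q := by
          rw [dif_neg hfindF, ← hQdef]; omega
        have hrc : ∀ i, ruC k hi b d i =
            if Q < i then b i else if i = Q then some d else none :=
          fun i => by rw [ruC_even h1 hC2 hodd, hmax]
        have hrp : ∀ i, ruP k hi b d i =
            if ∃ c, b i = some c ∧ c ≤ d then some d else b i :=
          fun i => by rw [ruP_evall h1 hodd hOlt hfindF]
        have hag : ∀ i, Q ≤ i → i ≤ k →
            ruP k hi b d i = (if Q < i then b i else if i = Q then some d else none) := by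
          intro i h1' h2'
          rw [hrp i]
          rcases eq_or_lt_of_le h1' with h | h
          · rw [if_pos ⟨q, by rw [← h]; exact hq, le_of_lt hqd⟩,
              if_neg (show ¬ Q < i by omega), if_pos h.symm]
          · rw [if_pos h]
            by_cases hple : ∃ c, b i = some c ∧ c ≤ d
            · obtain ⟨c, hc, hcd⟩ := hple
              have hcd' : c = d := by
                rcases Nat.lt_or_ge c d with h' | h'
                · exact absurd ⟨c, hc, h'⟩ (hnoPlt i h h2')
                · omega
              rw [if_pos ⟨c, hc, hcd⟩, hc, hcd']
            · rw [if_neg hple]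
        have hbel : ∀ i < Q,
            (if Q < i then b i else if i = Q then some d else none) = none :=
          fun i h' => by
            rw [if_neg (show ¬ Q < i by omega), if_neg (show ¬ i = Q by omega)]
        constructor
        · exact seqGe_of_agree_above (Q := Q)
            (fun i h1' h2' => (hag i h1' h2').trans ((htrgen Q _ hrc i).trans (hrc i)).symm)
            (fun i h' => (htrgen Q _ hrc i).trans ((hrc i).trans (hbel i h')))
        · refine valw_le_valw (Q := Q)
            (fun i h1' h2' => (hag i h1' h2').trans (hrc i).symm)
            (fun i h' => (hrc i).trans (hbel i h')) ?_
          intro i h' c hc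
          rw [hrp i] at hc
          by_cases hple : ∃ c, b i = some c ∧ c ≤ d
          · rw [if_pos hple] at hc; injection hc with h; subst h; exact hev
          · rw [if_neg hple] at hc
            obtain ⟨c', hc', hec'⟩ := hallEv i (by omega)
            rw [hc] at hc'; injection hc' with h; subst h
            exact hec'

/-- The colour-witness update dominates the concise classic update pointwise on `ℂ`. -/
lemma up_pointwise {lo hi e k : ℕ} {b : Wit} (hb : memC lo hi e k b) (d : ℕ) :
    stGe k (upP k hi e (some b) d) (upC k hi e (some b) d) := by
  have hmain : seqGe k (ruP k hi b d) (trunc k (ruC k hi b d)) ∧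
      valw k (ruC k hi b d) ≤ valw k (ruP k hi b d) := by
    rcases Nat.even_or_odd d with h | h
    · exact ru_main_even hb h
    · obtain ⟨h1, h2⟩ := ru_main_odd hb h
      exact ⟨seqGe_of_eq h1, h2⟩
  show stGe k
    (if valw k (ruP k hi b d) ≤ e then some (ruP k hi b d) else none)
    (if valw k (ruC k hi b d) ≤ e then some (trunc k (ruC k hi b d)) else none)
  by_cases hP : valw k (ruP k hi b d) ≤ e
  · rw [if_pos hP, if_pos (le_trans hmain.2 hP)]
    exact hmain.1
  · rw [if_neg hP]
    trivial

/-- A nonempty finite set carrying a total transitive relation has a minimum. -/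
lemma exists_min_of_finite {α : Type*} (R : α → α → Prop)
    (htot : ∀ a b, R a b ∨ R b a) (htrans : ∀ {a b c}, R a b → R b c → R a c)
    (s : Finset α) (hne : s.Nonempty) : ∃ x ∈ s, ∀ y ∈ s, R y x := by
  classical
  induction s using Finset.induction_on with
  | empty => exact absurd hne (by simp)
  | @insert a s ha ih =>
    by_cases hs : s.Nonempty
    · obtain ⟨x, hx, hmin⟩ := ih hs
      rcases htot a x with h | h
      · refine ⟨x, Finset.mem_insert_of_mem hx, fun y hy => ?_⟩
        rcases Finset.mem_insert.mp hy with rfl | hys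
        · exact h
        · exact hmin y hys
      · refine ⟨a, Finset.mem_insert_self a s, fun y hy => ?_⟩
        rcases Finset.mem_insert.mp hy with rfl | hys
        · exact (htot y y).elim id id
        · exact htrans (hmin y hys) h
    · refine ⟨a, Finset.mem_insert_self a s, fun y hy => ?_⟩
      rcases Finset.mem_insert.mp hy with rfl | hys
      · exact (htot y y).elim id id
      · exact absurd ⟨y, hys⟩ hs

lemma seqGe_congr {k : ℕ} {a a' b b' : Wit} (ha : ∀ i ≤ k, a i = a' i)
    (hb : ∀ i ≤ k, b i = b' i) (h : seqGe k a b) : seqGe k a' b' :=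
  seqGe_trans (seqGe_of_eq fun i hik => (ha i hik).symm)
    (seqGe_trans h (seqGe_of_eq hb))

/-- Restriction of a state to the indices `≤ k`. -/
noncomputable def nu (k : ℕ) : St → St :=
  Option.map (fun w i => if i ≤ k then w i else none)

lemma stGe_nu {k : ℕ} (x y : St) : stGe k x y ↔ stGe k (nu k x) (nu k y) := by
  cases x with
  | none => simp [nu, stGe]
  | some a =>
    cases y with
    | none => simp [nu, stGe]
    | some b =>
      show seqGe k a b ↔ seqGe k _ _
      constructor
      · exact seqGe_congr (fun i hik => (if_pos hik).symm) (fun i hik => (if_pos hik).symm)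
      · exact seqGe_congr (fun i hik => if_pos hik) (fun i hik => if_pos hik)

/-- Any nonempty set of states with entries bounded by `M` on indices `≤ k` has a
`⊒`-minimum. -/
lemma exists_stGe_min {k M : ℕ} {S : Set St} (hne : S.Nonempty)
    (hbd : ∀ x ∈ S, ∀ w, x = some w → ∀ i ≤ k, ∀ c, w i = some c → c ≤ M) :
    ∃ x ∈ S, ∀ y ∈ S, stGe k y x := by
  classical
  -- the image of `S` under restriction is finite
  have hEfin : {w : Wit | (∀ i, ∀ c, w i = some c → c ≤ M) ∧ ∀ i, k < i → w i = none}.Finite := by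
    have : {w : Wit | (∀ i, ∀ c, w i = some c → c ≤ M) ∧ ∀ i, k < i → w i = none} ⊆
        (fun f : Fin (k+1) → Option (Fin (M+1)) =>
          (fun i => if h : i < k + 1 then (f ⟨i, h⟩).map (fun c => (c : ℕ)) else none : Wit)) ''
          Set.univ := by
      rintro w ⟨hwM, hwk⟩
      refine ⟨fun j => (w j.val).bind (fun c => if h : c < M + 1 then some ⟨c, h⟩ else none),
        Set.mem_univ _, ?_⟩
      funext i
      beta_reduce
      by_cases hik : i < k + 1
      · rw [dif_pos hik]
        cases hwi : w i with
        | none => simp [hwi]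
        | some c =>
          have hcM : c ≤ M := hwM i c hwi
          simp [hwi, hcM]
      · rw [dif_neg hik, hwk i (by omega)]
    exact Set.Finite.subset ((Set.finite_univ).image _) this
  have hTfin : (nu k '' S).Finite := by
    apply Set.Finite.subset (Set.Finite.insert none (hEfin.image some))
    rintro t ⟨x, hxS, rfl⟩
    cases x with
    | none => exact Set.mem_insert _ _
    | some w =>
      refine Set.mem_insert_of_mem _ ⟨fun i => if i ≤ k then w i else none, ⟨?_, ?_⟩, rfl⟩
      · intro i c hc
        beta_reduce at hc
        by_cases hik : i ≤ k
        · rw [if_pos hik] at hc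
          exact hbd _ hxS w rfl i hik c hc
        · rw [if_neg hik] at hc
          exact nomatch hc
      · intro i hik
        beta_reduce
        rw [if_neg (by omega)]
  obtain ⟨x0, hx0⟩ := hne
  have htne : (hTfin.toFinset).Nonempty :=
    ⟨nu k x0, hTfin.mem_toFinset.mpr ⟨x0, hx0, rfl⟩⟩
  obtain ⟨t, htmem, hmin⟩ := exists_min_of_finite (stGe k) (stGe_total k)
    (fun h1 h2 => stGe_trans h1 h2) hTfin.toFinset htne
  obtain ⟨x, hxS, hxt⟩ := hTfin.mem_toFinset.mp htmem
  refine ⟨x, hxS, fun y hyS => ?_⟩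
  rw [stGe_nu]
  have := hmin (nu k y) (hTfin.mem_toFinset.mpr ⟨y, hyS, rfl⟩)
  rwa [hxt]

lemma trunc_entry (k : ℕ) (u : Wit) (i : ℕ) : trunc k u i = u i ∨ trunc k u i = none := by
  cases hui : u i with
  | none => right; exact trunc_none hui
  | some o =>
    by_cases h : Odd o ∧ ∃ i', i < i' ∧ i' ≤ k ∧ u i' = some o
    · right; exact trunc_dup hui h
    · left; rw [trunc_some hui h]

lemma ruC_entry (k hi : ℕ) (v : Wit) (d : ℕ) (i : ℕ) :
    ruC k hi v d i = v i ∨ ruC k hi v d i = some d ∨ ruC k hi v d i = none := by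
  by_cases h1 : Odd d ∧ d = hi
  · rw [ruC_won h1]; right; right; rfl
  by_cases h2 : (Odd d ∧ ∀ i ≤ k, v i = none ∨ ∃ c, v i = some c ∧ d ≤ c)
       ∨ (Even d ∧ ∀ i ≤ k, ∃ c, v i = some c ∧ Even c ∧ d ≤ c)
  · rw [ruC_id h1 h2]; left; rfl
  by_cases h3 : Odd d
  · simp only [ruC_odd h1 h2 h3]
    split_ifs <;> simp
  · simp only [ruC_even h1 h2 h3]
    split_ifs <;> simp

/-- Entries of the classic update of a concise witness are bounded by `hi`. -/
lemma upC_bound {lo hi e k d : ℕ} (hd2 : d ≤ hi) {x : St} (hx : memCW lo hi e k x) :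
    ∀ w, upC k hi e x d = some w → ∀ i ≤ k, ∀ c, w i = some c → c ≤ hi := by
  rcases hx with rfl | ⟨v, rfl, hv⟩
  · intro w hw
    exact absurd hw (by simp [upC])
  · intro w hw i hik c hc
    have hw' : w = trunc k (ruC k hi v d) := by
      by_cases hval : valw k (ruC k hi v d) ≤ e
      · have : upC k hi e (some v) d = some (trunc k (ruC k hi v d)) := by
          show (if valw k (ruC k hi v d) ≤ e then _ else _) = _
          rw [if_pos hval]
        rw [this] at hw
        exact (Option.some.injEq _ _ ▸ hw).symm
      · have : upC k hi e (some v) d = none := by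
          show (if valw k (ruC k hi v d) ≤ e then _ else _) = _
          rw [if_neg hval]
        rw [this] at hw
        exact absurd hw (by simp)
    subst hw'
    rcases trunc_entry k (ruC k hi v d) i with ht | ht
    · rw [ht] at hc
      rcases ruC_entry k hi v d i with hr | hr | hr
      · rw [hr] at hc
        rcases hv.1 i hik with h | ⟨c', hc', hcm⟩
        · rw [h] at hc; exact nomatch hc
        · rw [hc'] at hc; injection hc with h; subst h; exact hcm.2.1
      · rw [hr] at hc; injection hc with h; omega
      · rw [hr] at hc; exact nomatch hc
    · rw [ht] at hc; exact nomatch hc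

/-- The antagonistic classic update is well defined: the minimum exists. -/
lemma auC_spec {lo hi e k : ℕ} {b : Wit} (hb : memC lo hi e k b) {d : ℕ} (hd2 : d ≤ hi) :
    ∃ x : St, (∃ c : St, memCW lo hi e k c ∧ stGe k c (some b) ∧ upC k hi e c d = x) ∧
        ∀ y : St, (∃ c : St, memCW lo hi e k c ∧ stGe k c (some b) ∧ upC k hi e c d = y) →
          stGe k y x := by
  have := exists_stGe_min (k := k) (M := hi)
    (S := {x | ∃ c : St, memCW lo hi e k c ∧ stGe k c (some b) ∧ upC k hi e c d = x})
    ⟨upC k hi e (some b) d, some b, Or.inr ⟨b, rfl, hb⟩, stGe_refl k (some b), rfl⟩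
    (by
      rintro x ⟨c, hcmem, -, rfl⟩ w hxw i hik cc hcc
      exact upC_bound hd2 hcmem w hxw i hik cc hcc)
  obtain ⟨x, hxS, hmin⟩ := this
  exact ⟨x, hxS, hmin⟩

end Helpers

/-- For every `b ∈ ℂ` and every colour `d ∈ C`: `au₊(b,d) ⊒ au(b,d)`, where `k = ⌊log₂ e⌋`. -/
theorem auP_ge_auC (lo hi e : ℕ) (hlo : lo = 1 ∨ lo = 2) (hlohi : lo ≤ hi) (he : 1 ≤ e)
    (b : Wit) (hb : memC lo hi e (Nat.log 2 e) b)
    (d : ℕ) (hd : d ∈ Set.Icc lo hi) :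
    stGe (Nat.log 2 e) (auP lo hi e (Nat.log 2 e) (some b) d)
      (auC lo hi e (Nat.log 2 e) (some b) d) := by
  obtain ⟨hd1, hd2⟩ := hd
  have hCspec := auC_spec hb hd2
  simp only [auP, auC, antag]
  rw [dif_pos hCspec]
  by_cases hP : ∃ x : St,
      (∃ c : St, memCW lo hi e (Nat.log 2 e) c ∧ stGe (Nat.log 2 e) c (some b) ∧
        upP (Nat.log 2 e) hi e c d = x) ∧
      ∀ y : St, (∃ c : St, memCW lo hi e (Nat.log 2 e) c ∧ stGe (Nat.log 2 e) c (some b) ∧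
        upP (Nat.log 2 e) hi e c d = y) → stGe (Nat.log 2 e) y x
  · rw [dif_pos hP]
    obtain ⟨c, hcmem, hcge, hceq⟩ := hP.choose_spec.1
    rcases hcmem with rfl | ⟨w, rfl, hw⟩
    · have hnone : upP (Nat.log 2 e) hi e none d = none := rfl
      rw [← hceq, hnone]
      trivial
    · rw [← hceq]
      exact stGe_trans (up_pointwise hw d)
        (hCspec.choose_spec.2 _ ⟨some w, Or.inr ⟨w, rfl, hw⟩, hcge, rfl⟩)
  · rw [dif_neg hP]
    trivial
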